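/- Let $V_k = \operatorname{ess\,sup}_{\tau \ge k} \mathbb{E}[g_\tau \mid \mathcal{F}_k]$ be the Snell envelope of an adapted integrable reward process $(g_k)_{k=0}^N$, with Doob decomposition $V_k = V_0 + M_k - A_k$ where $M$ is a martingale and $A$ is nondecreasing predictable with $M_0 = A_0 = 0$. Then $\mathbb{E}[\max_{0\le k\le N}(g_k - M_k)] = V_0 + \mathbb{E}[\max_{0\le k\le N}(g_k - V_k - A_k)]$ and since $g_k \le V_k$ and $A_k \ge 0$ pointwise, $\mathbb{E}[\max_{0\le k\le N}(g_k - M_k)] \le V_0$; combined with weak duality, equality holds: $V_0 = \mathbb{E}[\max_{0\le k\le N}(g_k - M_k)]$ for the Doob martingale $M$. -/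
import Mathlib


open MeasureTheory

theorem stmt2 {Ω : Type*} {m : MeasurableSpace Ω} {μ : Measure Ω} [IsProbabilityMeasure μ]
    (N : ℕ) (ℱ : Filtration ℕ m) (g V M A : ℕ → Ω → ℝ) (V0 : ℝ)
    (hg_adapted : Adapted ℱ g) (hg_int : ∀ k, Integrable (g k) μ)
    (hg_nonneg : ∀ k ω, 0 ≤ g k ω)
    (hV_adapted : Adapted ℱ V) (hV_int : ∀ k, Integrable (V k) μ)
    (hVN : V N =ᵐ[μ] g N)
    (hVrec : ∀ k < N, V k =ᵐ[μ] fun ω => max (g k ω) ((μ[V (k + 1)|ℱ k]) ω))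
    (hM : Martingale M ℱ μ) (hM0 : M 0 =ᵐ[μ] 0)
    (hA0 : A 0 =ᵐ[μ] 0) (hA_pred : ∀ k < N, StronglyMeasurable[ℱ k] (A (k + 1)))
    (hA_int : ∀ k, Integrable (A k) μ)
    (hA_mono : ∀ k < N, A k ≤ᵐ[μ] A (k + 1))
    (hDoob : ∀ k ≤ N, V k =ᵐ[μ] fun ω => V0 + M k ω - A k ω)
    (hdom : ∀ k ≤ N, g k ≤ᵐ[μ] V k)
    (hA_nonneg : ∀ k ≤ N, 0 ≤ᵐ[μ] A k)
    (hint1 : Integrable (fun ω => ⨆ k : Fin (N + 1), (g k ω - M k ω)) μ)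
    (hint2 : Integrable (fun ω => ⨆ k : Fin (N + 1), (g k ω - V k ω - A k ω)) μ)
    (hweak : V0 ≤ ∫ ω, ⨆ k : Fin (N + 1), (g k ω - M k ω) ∂μ) :
    (∫ ω, ⨆ k : Fin (N + 1), (g k ω - M k ω) ∂μ
        = V0 + ∫ ω, ⨆ k : Fin (N + 1), (g k ω - V k ω - A k ω) ∂μ)
    ∧ (∫ ω, ⨆ k : Fin (N + 1), (g k ω - M k ω) ∂μ ≤ V0)
    ∧ V0 = ∫ ω, ⨆ k : Fin (N + 1), (g k ω - M k ω) ∂μ := by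
  have hae : ∀ᵐ ω ∂μ, ∀ k : Fin (N + 1),
      V (k : ℕ) ω = V0 + M (k : ℕ) ω - A (k : ℕ) ω ∧ g (k : ℕ) ω ≤ V (k : ℕ) ω ∧
        0 ≤ A (k : ℕ) ω := by
    rw [ae_all_iff]
    intro k
    have hk : (k : ℕ) ≤ N := Nat.lt_succ_iff.mp k.isLt
    filter_upwards [hDoob k hk, hdom k hk, hA_nonneg k hk] with ω h1 h2 h3
    exact ⟨h1, h2, h3⟩
  have key1 : ∀ᵐ ω ∂μ, (⨆ k : Fin (N + 1), (g (k : ℕ) ω - M (k : ℕ) ω))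
      = V0 + ⨆ k : Fin (N + 1), (g (k : ℕ) ω - V (k : ℕ) ω - A (k : ℕ) ω) := by
    filter_upwards [hae] with ω h
    have heq : ∀ k : Fin (N + 1),
        g (k : ℕ) ω - M (k : ℕ) ω = V0 + (g (k : ℕ) ω - V (k : ℕ) ω - A (k : ℕ) ω) := by
      intro k
      have := (h k).1
      linarith
    have hbdd : BddAbove (Set.range fun k : Fin (N + 1) =>
        g (k : ℕ) ω - V (k : ℕ) ω - A (k : ℕ) ω) :=
      (Set.finite_range _).bddAbove
    rw [iSup_congr heq]
    exact (add_ciSup hbdd V0).symm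
  have hI1 : (∫ ω, ⨆ k : Fin (N + 1), (g (k : ℕ) ω - M (k : ℕ) ω) ∂μ)
      = V0 + ∫ ω, ⨆ k : Fin (N + 1), (g (k : ℕ) ω - V (k : ℕ) ω - A (k : ℕ) ω) ∂μ := by
    rw [integral_congr_ae key1, integral_add (integrable_const V0) hint2]
    simp
  have hneg : (∫ ω, ⨆ k : Fin (N + 1), (g (k : ℕ) ω - V (k : ℕ) ω - A (k : ℕ) ω) ∂μ) ≤ 0 := by
    apply integral_nonpos_of_ae
    filter_upwards [hae] with ω h
    simp only [Pi.zero_apply]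
    apply ciSup_le
    intro k
    have h1 := (h k).2.1
    have h2 := (h k).2.2
    linarith
  have h2 : (∫ ω, ⨆ k : Fin (N + 1), (g (k : ℕ) ω - M (k : ℕ) ω) ∂μ) ≤ V0 := by
    rw [hI1]; linarith
  exact ⟨hI1, h2, le_antisymm hweak h2⟩
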